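/- A transitive group G of permutations of a set Ω is primitive if and only if for every pair of distinct elements α, β ∈ Ω, the graph with vertex set Ω and edge set equal to the G-orbit of the ordered pair (α, β) is connected (where connectedness is with respect to the underlying undirected reachability relation). -/

import Mathlib

open Pointwise

/-- A permutation preserves a directed edge relation. -/
def DPreserves {V : Type*} (E : V → V → Prop) (g : Equiv.Perm V) : Prop :=
  ∀ a b : V, E (g a) (g b) ↔ E a b

/-- The automorphism group of the directed graph with edge relation `E`,
as a subgroup of the symmetric group. -/
def autSub {V : Type*} (E : V → V → Prop) : Subgroup (Equiv.Perm V) where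
  carrier := {g | DPreserves E g}
  one_mem' := fun _ _ => Iff.rfl
  mul_mem' := by
    intro g h hg hh a b
    exact (hg (h a) (h b)).trans (hh a b)
  inv_mem' := by
    intro g hg a b
    simpa using (hg (g⁻¹ a) (g⁻¹ b)).symm

/-- A subgroup of the symmetric group acts primitively: it is transitive and the only
invariant equivalence relations are the trivial and the universal ones. -/
def IsPrimitiveSub {X : Type*} (G : Subgroup (Equiv.Perm X)) : Prop :=
  (∀ a b : X, ∃ g ∈ G, g a = b) ∧
    ∀ r : Setoid X, (∀ g ∈ G, ∀ a b : X, r.r a b ↔ r.r (g a) (g b)) →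
      (∀ a b : X, r.r a b ↔ a = b) ∨ ∀ a b : X, r.r a b

/-- A subgroup of the symmetric group acts regularly: transitively with trivial
point stabilisers. -/
def IsRegularSub {X : Type*} (G : Subgroup (Equiv.Perm X)) : Prop :=
  (∀ a b : X, ∃ g ∈ G, g a = b) ∧ ∀ g ∈ G, ∀ a : X, g a = a → g = 1

/-- `a` is a cut vertex of `Γ`: deleting it disconnects the graph. -/
def IsCutVertexOf {V : Type*} (Γ : SimpleGraph V) (a : V) : Prop :=
  ¬ (Γ.induce {v | v ≠ a}).Preconnected

/-- `Γ` is connected and has connectivity one. -/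
def HasConnOne {V : Type*} (Γ : SimpleGraph V) : Prop :=
  Γ.Connected ∧ ∃ a, IsCutVertexOf Γ a

/-- `B` is (the vertex set of) a block of `Γ`: a connected induced subgraph with no cut
vertex of its own, maximal with these properties. -/
def IsBlockOf {V : Type*} (Γ : SimpleGraph V) (B : Set V) : Prop :=
  (Γ.induce B).Connected ∧ (∀ b ∈ B, (Γ.induce (B \ {b})).Preconnected) ∧
    ∀ C : Set V, B ⊆ C → (Γ.induce C).Connected →
      (∀ c ∈ C, (Γ.induce (C \ {c})).Preconnected) → B = C

/-- Vertex type of the block-cut-vertex tree: cut vertices plus blocks. -/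
def BCVertex {V : Type*} (Γ : SimpleGraph V) : Type _ :=
  {a : V // IsCutVertexOf Γ a} ⊕ {B : Set V // IsBlockOf Γ B}

/-- The block-cut-vertex tree: a cut vertex is adjacent to the blocks containing it. -/
def bcTree {V : Type*} (Γ : SimpleGraph V) : SimpleGraph (BCVertex Γ) :=
  SimpleGraph.fromRel (fun x y =>
    ∃ (a : {a : V // IsCutVertexOf Γ a}) (B : {B : Set V // IsBlockOf Γ B}),
      x = Sum.inl a ∧ y = Sum.inr B ∧ (a : V) ∈ (B : Set V))

/-- The stabiliser (in the full symmetric group) of a vertex of the block-cut-vertex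
tree: the point stabiliser for a cut vertex, the setwise stabiliser for a block. -/
def bcStab {V : Type*} {Γ : SimpleGraph V} (x : BCVertex Γ) : Subgroup (Equiv.Perm V) :=
  match x with
  | Sum.inl a => MulAction.stabilizer (Equiv.Perm V) (a : V)
  | Sum.inr B => MulAction.stabilizer (Equiv.Perm V) (B : Set V)

/-- `z` lies on a geodesic between `a` and `b`. -/
def OnGeodesic {W : Type*} (T : SimpleGraph W) (a b z : W) : Prop :=
  T.dist a z + T.dist z b = T.dist a b

/-- `a` and `b` lie in the same connected component of `T` with the vertex `y` deleted. -/
def SameCompAvoiding {W : Type*} (T : SimpleGraph W) (y a b : W) : Prop :=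
  ∃ (ha : a ≠ y) (hb : b ≠ y), (T.induce {v | v ≠ y}).Reachable ⟨a, ha⟩ ⟨b, hb⟩

/-- `B` and `C` are isomorphic as directed graphs (with edge relation `E`). -/
def BlocksIsomorphic {V : Type*} (E : V → V → Prop) (B C : Set V) : Prop :=
  ∃ e : B ≃ C, ∀ a b : B, E (a : V) (b : V) ↔ E (e a : V) (e b : V)

/-- The automorphism group of the directed graph induced on `B`. -/
def BlockAut {V : Type*} (E : V → V → Prop) (B : Set V) : Subgroup (Equiv.Perm B) :=
  autSub (fun a b : B => E (a : V) (b : V))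

/-- `B` has at least three vertices. -/
def HasThreeVertices {V : Type*} (B : Set V) : Prop :=
  ∃ x y z : V, x ∈ B ∧ y ∈ B ∧ z ∈ B ∧ x ≠ y ∧ x ≠ z ∧ y ≠ z

/-- Primitivity for an abstract group action: transitivity, and the only invariant
equivalence relations are the trivial and the universal ones. -/
def IsPrimAction (G Ω : Type*) [Group G] [MulAction G Ω] : Prop :=
  MulAction.IsPretransitive G Ω ∧
    ∀ r : Setoid Ω, (∀ (g : G) (a b : Ω), r.r a b ↔ r.r (g • a) (g • b)) →
      (∀ a b : Ω, r.r a b ↔ a = b) ∨ ∀ a b : Ω, r.r a b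


/-- Higman. A transitive group is primitive iff all its orbital graphs
are connected. -/
theorem stmt1 {G Ω : Type*} [Group G] [MulAction G Ω]
    (htrans : MulAction.IsPretransitive G Ω) :
    IsPrimAction G Ω ↔
      ∀ α β : Ω, α ≠ β → ∀ x y : Ω,
        Relation.ReflTransGen
          (fun u v => (∃ g : G, g • α = u ∧ g • β = v) ∨ (∃ g : G, g • α = v ∧ g • β = u))
          x y := by
  classical
  constructor
  · rintro ⟨-, hprim⟩ α β hab x y
    set E : Ω → Ω → Prop := fun u v =>
      (∃ g : G, g • α = u ∧ g • β = v) ∨ (∃ g : G, g • α = v ∧ g • β = u) with hE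
    have hEsymm : Symmetric E := fun u v h => h.symm
    have hEinv : ∀ (g : G) (a b : Ω), E a b → E (g • a) (g • b) := by
      rintro g a b (⟨h, ha, hb⟩ | ⟨h, ha, hb⟩)
      · exact Or.inl ⟨g * h, by simp [mul_smul, ha, hb]⟩
      · exact Or.inr ⟨g * h, by simp [mul_smul, ha, hb]⟩
    have hRinv : ∀ (g : G) (a b : Ω),
        Relation.ReflTransGen E a b → Relation.ReflTransGen E (g • a) (g • b) := by
      intro g a b hab
      exact Relation.ReflTransGen.lift (p := E) (g • ·) (fun u v h => hEinv g u v h) a b hab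
    set r : Setoid Ω :=
      ⟨Relation.ReflTransGen E,
        ⟨fun _ => Relation.ReflTransGen.refl,
         fun h => (letI : Std.Symm E := ⟨fun _ _ h => hEsymm h⟩; Std.Symm.symm _ _ h),
         fun h h' => h.trans h'⟩⟩ with hr
    have hinv : ∀ (g : G) (a b : Ω), r.r a b ↔ r.r (g • a) (g • b) := by
      intro g a b
      constructor
      · exact hRinv g a b
      · intro h
        exact (by simpa using hRinv g⁻¹ (g • a) (g • b) h : Relation.ReflTransGen E a b)
    rcases hprim r hinv with htriv | huniv
    · exfalso
      have : r.r α β := Relation.ReflTransGen.single (Or.inl ⟨1, by simp, by simp⟩)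
      exact hab ((htriv α β).mp this)
    · exact huniv x y
  · intro h
    refine ⟨htrans, fun r hrinv => ?_⟩
    by_cases htriv : ∀ a b : Ω, r.r a b ↔ a = b
    · exact Or.inl htriv
    · right
      push_neg at htriv
      obtain ⟨α, β, hiff⟩ := htriv
      have hrab : r.r α β ∧ α ≠ β := by
        rcases hiff with ⟨h1, h2⟩ | ⟨h1, h2⟩
        · exact ⟨h1, h2⟩
        · exact absurd (h2 ▸ r.refl α) h1
      intro x y
      have hpath := h α β hrab.2 x y
      induction hpath with
      | refl => exact r.refl x
      | tail _ hE ih =>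
        rename_i u v _
        rcases hE with ⟨g, hgu, hgv⟩ | ⟨g, hgu, hgv⟩
        · exact r.trans ih (hgu ▸ hgv ▸ (hrinv g α β).mp hrab.1)
        · exact r.trans ih (r.symm (hgu ▸ hgv ▸ (hrinv g α β).mp hrab.1))
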